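/- Suppose a schedule guarantees that for every time slot τ there are at least N honest parties active throughout [τ, τ+W], and each of these parties is independently and uniformly assigned a column in [k₂]. Fix a column c, a lifetime T ≥ 0, and Δ ≤ W. Then the probability that there exists a time 0 ≤ τ ≤ T at which no honest party assigned to column c is active throughout [τ, τ+Δ] is at most ⌈(T+1)/(W-Δ+1)⌉ · exp(-N/k₂). -/
import Mathlib


open MeasureTheory

private lemma uniform_avoid_measure {ι : Type*} [Fintype ι] [DecidableEq ι]
    (k : ℕ) (hk : 0 < k) (c : Fin k) (t : Finset ι) :
    ((@PMF.uniformOfFintype (ι → Fin k) _ ⟨fun _ => ⟨0, hk⟩⟩).toMeasure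
        {f | ∀ p ∈ t, f p ≠ c}).toReal = (((k : ℝ) - 1) / k) ^ t.card := by
  haveI : Nonempty (ι → Fin k) := ⟨fun _ => ⟨0, hk⟩⟩
  have hmeas : MeasurableSet {f : ι → Fin k | ∀ p ∈ t, f p ≠ c} :=
    (Set.toFinite _).measurableSet
  rw [PMF.toMeasure_uniformOfFintype_apply _ hmeas]
  have hS : ({f : ι → Fin k | ∀ p ∈ t, f p ≠ c}).Finite := Set.toFinite _
  have hfin : hS.toFinset
      = Fintype.piFinset (fun p => if p ∈ t then ({c}ᶜ : Finset (Fin k)) else Finset.univ) := by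
    ext f
    simp only [Set.Finite.mem_toFinset, Set.mem_setOf_eq, Fintype.mem_piFinset]
    constructor
    · intro h p
      by_cases hp : p ∈ t <;> simp [hp, h p]
    · intro h p hp
      have := h p
      simpa [hp] using this
  have hcard : Nat.card {f : ι → Fin k | ∀ p ∈ t, f p ≠ c}
      = (k - 1) ^ t.card * k ^ (Fintype.card ι - t.card) := by
    rw [Nat.card_coe_set_eq, Set.ncard_eq_toFinset_card _ hS, hfin, Fintype.card_piFinset]
    have hpt : ∀ p : ι, ((if p ∈ t then ({c}ᶜ : Finset (Fin k)) else Finset.univ).card)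
        = if p ∈ t then k - 1 else k := by
      intro p
      by_cases hp : p ∈ t <;> simp [hp, Finset.card_compl]
    simp only [hpt]
    rw [Finset.prod_ite, Finset.prod_const, Finset.prod_const]
    have e1 : Finset.univ.filter (fun p => p ∈ t) = t := by ext p; simp
    have e2 : Finset.univ.filter (fun p => ¬ p ∈ t) = tᶜ := by ext p; simp
    rw [e1, e2, Finset.card_compl]
  have hcard' : ∀ inst : Fintype ↑{f : ι → Fin k | ∀ p ∈ t, f p ≠ c},
      @Fintype.card _ inst = (k - 1) ^ t.card * k ^ (Fintype.card ι - t.card) := fun inst => by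
    rw [← @Nat.card_eq_fintype_card _ inst, hcard]
  rw [hcard' _, Fintype.card_fun, Fintype.card_fin]
  have hIn : t.card ≤ Fintype.card ι := t.card_le_univ
  have hk0 : (k : ℝ) ≠ 0 := Nat.cast_ne_zero.mpr hk.ne'
  rw [ENNReal.toReal_div, ENNReal.toReal_natCast, ENNReal.toReal_natCast]
  push_cast [Nat.cast_sub (Nat.one_le_iff_ne_zero.mpr hk.ne')]
  rw [show (k : ℝ) ^ Fintype.card ι = k ^ t.card * k ^ (Fintype.card ι - t.card) by
    rw [← pow_add, Nat.add_sub_cancel' hIn]]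
  rw [mul_div_mul_comm, div_self (pow_ne_zero _ hk0), mul_one, div_pow]

/-- Probability of a bad column over the lifetime. The schedule guarantees that
for every time `τ` at least `N` honest parties (from a finite set `ι`) are active
throughout `[τ, τ+W]`; each party is independently and uniformly assigned a column
in `[k₂]`. For a fixed column `c`, lifetime `T` and `Δ ≤ W`, the probability that
at some time `0 ≤ τ ≤ T` no party assigned to column `c` is active throughout
`[τ, τ+Δ]` is at most `⌈(T+1)/(W-Δ+1)⌉ · exp(-N/k₂)`. -/
theorem column_good_probability {ι : Type*} [Fintype ι] [DecidableEq ι]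
    (Active : ι → ℕ → Prop)
    (N W k₂ T Δ : ℕ) (hk : 0 < k₂) (hΔ : Δ ≤ W)
    (hsched : ∀ τ : ℕ, ∃ s : Finset ι, N ≤ s.card ∧
        ∀ p ∈ s, ∀ t, τ ≤ t → t ≤ τ + W → Active p t)
    (c : Fin k₂) :
    ((@PMF.uniformOfFintype (ι → Fin k₂) _ ⟨fun _ => ⟨0, hk⟩⟩).toMeasure
        {f | ∃ τ ≤ T, ¬ ∃ p : ι, f p = c ∧ ∀ t, τ ≤ t → t ≤ τ + Δ → Active p t}).toReal
      ≤ (⌈((T : ℝ) + 1) / ((W : ℝ) - Δ + 1)⌉₊ : ℝ) * Real.exp (-((N : ℝ) / k₂)) := by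
  haveI : Nonempty (ι → Fin k₂) := ⟨fun _ => ⟨0, hk⟩⟩
  set μ := (@PMF.uniformOfFintype (ι → Fin k₂) _ ⟨fun _ => ⟨0, hk⟩⟩).toMeasure with hμ
  haveI : IsProbabilityMeasure μ := PMF.toMeasure.isProbabilityMeasure _
  set L : ℕ := W - Δ + 1 with hL
  have hLpos : 0 < L := Nat.succ_pos _
  have hLR : ((W : ℝ) - Δ + 1) = (L : ℝ) := by
    rw [hL]; push_cast [Nat.cast_sub hΔ]; ring
  set m : ℕ := ⌈((T : ℝ) + 1) / ((W : ℝ) - Δ + 1)⌉₊ with hm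
  -- T + 1 ≤ m * L
  have hTm : T + 1 ≤ m * L := by
    have h1 : ((T : ℝ) + 1) / L ≤ m := by rw [hm, hLR]; exact Nat.le_ceil _
    have h2 : ((T : ℝ) + 1) ≤ m * L := by
      rw [div_le_iff₀ (by exact_mod_cast hLpos)] at h1; exact h1
    exact_mod_cast h2
  choose s hs1 hs2 using hsched
  choose t ht hcard using fun j : ℕ => Finset.exists_subset_card_eq (hs1 (j * L))
  set E : ℕ → Set (ι → Fin k₂) := fun j => {f | ∀ p ∈ t j, f p ≠ c} with hE
  -- the bad set is covered by the E j's
  have hsub : {f : ι → Fin k₂ | ∃ τ ≤ T, ¬ ∃ p : ι, f p = c ∧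
      ∀ u, τ ≤ u → u ≤ τ + Δ → Active p u} ⊆ ⋃ j ∈ Finset.range m, E j := by
    rintro f ⟨τ, hτ, hno⟩
    have hdm := Nat.div_add_mod τ L
    have hmod := Nat.mod_lt τ hLpos
    set j := τ / L with hj
    have hjm : j < m := by
      rw [hj, Nat.div_lt_iff_lt_mul hLpos]
      omega
    refine Set.mem_biUnion (Finset.mem_range.mpr hjm) ?_
    have h1 : j * L ≤ τ := Nat.div_mul_le_self τ L
    have h2 : τ < j * L + L := by rw [mul_comm]; omega
    intro p hp hfc
    exact hno ⟨p, hfc, fun u hu1 hu2 =>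
      hs2 (j * L) p (ht j hp) u (by omega) (by omega)⟩
  calc (μ _).toReal ≤ (μ (⋃ j ∈ Finset.range m, E j)).toReal := by
        apply ENNReal.toReal_mono (measure_ne_top _ _) (measure_mono hsub)
    _ ≤ (∑ j ∈ Finset.range m, μ (E j)).toReal := by
        apply ENNReal.toReal_mono
        · exact (ENNReal.sum_lt_top.mpr (fun j _ => measure_lt_top _ _)).ne
        · exact measure_biUnion_finset_le _ _
    _ = ∑ j ∈ Finset.range m, (μ (E j)).toReal := ENNReal.toReal_sum
        (fun j _ => measure_ne_top _ _)
    _ ≤ ∑ j ∈ Finset.range m, Real.exp (-((N : ℝ) / k₂)) := by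
        apply Finset.sum_le_sum
        intro j _
        rw [hμ, hE, uniform_avoid_measure k₂ hk c (t j), hcard j]
        have hbase : ((k₂ : ℝ) - 1) / k₂ ≤ Real.exp (-(1 / k₂)) := by
          have := Real.add_one_le_exp (-(1 / (k₂ : ℝ)))
          have hk0 : (k₂ : ℝ) ≠ 0 := Nat.cast_ne_zero.mpr hk.ne'
          rw [sub_div, div_self hk0]
          linarith
        have hnn : 0 ≤ ((k₂ : ℝ) - 1) / k₂ := by
          apply div_nonneg _ (Nat.cast_nonneg _)
          have : (1 : ℝ) ≤ k₂ := by exact_mod_cast hk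
          linarith
        calc (((k₂ : ℝ) - 1) / k₂) ^ N ≤ (Real.exp (-(1 / k₂))) ^ N :=
              pow_le_pow_left₀ hnn hbase N
          _ = Real.exp (-((N : ℝ) / k₂)) := by
              rw [← Real.exp_nat_mul]; congr 1; field_simp
    _ = (m : ℝ) * Real.exp (-((N : ℝ) / k₂)) := by
        rw [Finset.sum_const, Finset.card_range, nsmul_eq_mul]
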